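/- Let p ≥ 2 be an integer. A complex number c belongs to the Multibrot set M^p if and only if |Q_{p,c}^m(0)| ≤ 2^(1/(p−1)) for every natural number m ≥ 1. -/

import Mathlib

private lemma multibrot_grow (p : ℕ) (hp : 2 ≤ p) (c z : ℂ)
    (hcz : ‖c‖ ≤ ‖z‖)
    (h2 : 2 < ‖z‖ ^ (p - 1)) :
    ∀ k : ℕ, (‖z‖ ^ (p - 1) - 1) ^ k * ‖z‖ ≤
      ‖(fun w : ℂ => w ^ p + c)^[k] z‖ := by
  set q : ℝ := ‖z‖ ^ (p - 1) - 1 with hq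
  have hq1 : 1 < q := by simp [hq]; linarith
  intro k
  induction k with
  | zero => simp
  | succ k ih =>
    set w : ℂ := (fun w : ℂ => w ^ p + c)^[k] z with hw
    have hzw : ‖z‖ ≤ ‖w‖ := by
      calc ‖z‖ = 1 * ‖z‖ := by ring
        _ ≤ q ^ k * ‖z‖ := by
            apply mul_le_mul_of_nonneg_right (one_le_pow₀ hq1.le) (norm_nonneg _)
        _ ≤ ‖w‖ := ih
    have hz0 : 0 ≤ ‖z‖ := norm_nonneg _
    have hiter : (fun w : ℂ => w ^ p + c)^[k + 1] z = w ^ p + c := by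
      rw [Function.iterate_succ_apply']
    rw [hiter]
    have h1 : ‖w ^ p‖ ≤ ‖w ^ p + c‖ + ‖c‖ := by
      calc ‖w ^ p‖ = ‖(w ^ p + c) + (-c)‖ := by ring_nf
        _ ≤ ‖w ^ p + c‖ + ‖-c‖ := norm_add_le _ _
        _ = ‖w ^ p + c‖ + ‖c‖ := by rw [norm_neg]
    have hwp : ‖w‖ ^ p - ‖w‖ ≤ ‖w ^ p + c‖ := by
      have : ‖c‖ ≤ ‖w‖ := le_trans hcz hzw
      have := norm_pow w p ▸ h1
      linarith [norm_pow w p, h1]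
    have hpow : ‖w‖ ^ p = ‖w‖ ^ (p - 1) * ‖w‖ := by
      rw [← pow_succ]
      congr 1
      omega
    have hmono : ‖z‖ ^ (p - 1) ≤ ‖w‖ ^ (p - 1) :=
      pow_le_pow_left₀ hz0 hzw _
    calc q ^ (k + 1) * ‖z‖ = q * (q ^ k * ‖z‖) := by ring
      _ ≤ q * ‖w‖ := by
          apply mul_le_mul_of_nonneg_left ih (by linarith)
      _ = (‖z‖ ^ (p - 1) - 1) * ‖w‖ := by rw [hq]
      _ ≤ (‖w‖ ^ (p - 1) - 1) * ‖w‖ := by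
          apply mul_le_mul_of_nonneg_right _ (norm_nonneg _)
          linarith
      _ = ‖w‖ ^ p - ‖w‖ := by rw [hpow]; ring
      _ ≤ ‖w ^ p + c‖ := hwp

theorem mem_multibrot_iff_abs_le (p : ℕ) (hp : 2 ≤ p) (c : ℂ) :
    (∃ M : ℝ, ∀ m : ℕ, 1 ≤ m → ‖(fun z : ℂ => z ^ p + c)^[m] 0‖ ≤ M) ↔
      ∀ m : ℕ, 1 ≤ m →
        ‖(fun z : ℂ => z ^ p + c)^[m] 0‖ ≤ (2 : ℝ) ^ ((1 : ℝ) / ((p : ℝ) - 1)) := by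
  set f : ℂ → ℂ := fun z => z ^ p + c with hf
  set R : ℝ := (2 : ℝ) ^ ((1 : ℝ) / ((p : ℝ) - 1)) with hRdef
  have hp1 : (1 : ℝ) ≤ (p : ℝ) - 1 := by
    have : (2 : ℝ) ≤ (p : ℝ) := by exact_mod_cast hp
    linarith
  have hRpow : R ^ (p - 1) = 2 := by
    rw [hRdef, ← Real.rpow_natCast ((2:ℝ) ^ ((1:ℝ)/((p:ℝ)-1))) (p-1),
      ← Real.rpow_mul (by norm_num)]
    have hcast : ((p - 1 : ℕ) : ℝ) = (p : ℝ) - 1 := by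
      have : 1 ≤ p := by omega
      push_cast [this]
      ring
    rw [hcast, one_div, inv_mul_cancel₀ (by linarith)]
    exact Real.rpow_one 2
  constructor
  · rintro ⟨M, hM⟩ m hm
    by_contra hlt
    push_neg at hlt
    -- choose index with |c| ≤ value and R < value
    have ha1 : f^[1] 0 = c := by
      simp [hf, zero_pow (by omega : p ≠ 0)]
    obtain ⟨m', hm', hcle, hRlt⟩ :
        ∃ m' : ℕ, 1 ≤ m' ∧ ‖c‖ ≤ ‖f^[m'] 0‖ ∧
          R < ‖f^[m'] 0‖ := by
      by_cases hcc : ‖c‖ ≤ ‖f^[m] 0‖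
      · exact ⟨m, hm, hcc, hlt⟩
      · push_neg at hcc
        exact ⟨1, le_refl 1, by rw [ha1], by rw [ha1]; exact lt_trans hlt hcc⟩
    set z : ℂ := f^[m'] 0 with hz
    have hR0 : 0 < R := Real.rpow_pos_of_pos (by norm_num) _
    have h2 : 2 < ‖z‖ ^ (p - 1) := by
      calc (2:ℝ) = R ^ (p - 1) := hRpow.symm
        _ < ‖z‖ ^ (p - 1) := by
            apply pow_lt_pow_left₀ hRlt hR0.le
            omega
    set q : ℝ := ‖z‖ ^ (p - 1) - 1 with hq
    have hq1 : 1 < q := by simp [hq]; linarith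
    have hz0 : 0 < ‖z‖ := lt_trans hR0 hRlt
    obtain ⟨k, hk⟩ := pow_unbounded_of_one_lt (M / ‖z‖) hq1
    have hgrow := multibrot_grow p hp c z hcle h2 k
    have hiter : f^[k] z = f^[k + m'] 0 := by
      rw [hz, ← Function.iterate_add_apply]
    have hMk := hM (k + m') (by omega)
    rw [← hiter] at hMk
    have : M < q ^ k * ‖z‖ := by
      rw [div_lt_iff₀ hz0] at hk
      linarith
    linarith
  · intro h
    exact ⟨R, h⟩
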